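/- Let q be a prime power, k an odd integer, i ≥ 0 an integer, and t = ((q−1)k − (q+1))/2 − i(q+1) ≥ 0. Define an F_q-linear map φ from homogeneous polynomials of degree t in X,Y over F_q to F_q(z) by φ(F) = F(z,1)·(z − z^q)^{i − (k−1)/2}. Then for every γ = [[a,b],[c,d]] ∈ GL₂(F_q), φ((ad−bc)^{i−(k−1)/2} F(dX+bY, cX+aY)) = (a+cz)^{-k} · (φF)((b+dz)/(a+cz)). -/

import Mathlib

open Matrix MvPolynomial

/-- The twisted symmetric-power action `γ.F = (ad-bc)^s F(dX+bY, cX+aY)`. -/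
noncomputable def symAct {A : Type*} [CommRing A] (s : ℤ) (γ : GL (Fin 2) A)
    (F : MvPolynomial (Fin 2) A) : MvPolynomial (Fin 2) A :=
  (((Matrix.GeneralLinearGroup.det γ) ^ s : Aˣ) : A) •
    aeval ![C ((γ : Matrix (Fin 2) (Fin 2) A) 1 1) * X 0 +
              C ((γ : Matrix (Fin 2) (Fin 2) A) 0 1) * X 1,
            C ((γ : Matrix (Fin 2) (Fin 2) A) 1 0) * X 0 +
              C ((γ : Matrix (Fin 2) (Fin 2) A) 0 0) * X 1] F

lemma aeval_mul_left_of_isHomogeneous {σ R S : Type*} [CommSemiring R] [CommSemiring S]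
    [Algebra R S] {n : ℕ} {P : MvPolynomial σ R} (h : P.IsHomogeneous n) (c : S) (x : σ → S) :
    aeval (fun i => c * x i) P = c ^ n * aeval x P := by
  rw [aeval_def, aeval_def, eval₂_eq, eval₂_eq, Finset.mul_sum]
  refine Finset.sum_congr rfl fun d hd => ?_
  have hdeg : ∑ i ∈ d.support, d i = n := by
    have h1 := h (mem_support_iff.mp hd)
    rw [show (1 : σ → ℕ) = fun _ => 1 from rfl, ← Finsupp.degree_eq_weight_one] at h1
    exact h1
  simp_rw [mul_pow]
  rw [Finset.prod_mul_distrib, Finset.prod_pow_eq_pow_sum, hdeg]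
  ring

universe u

lemma ratFunc_eval_div' {K L : Type u} [Field K] [Field L] (f : K →+* L) (x : L)
    (p q : Polynomial K) (hq : Polynomial.eval₂ f x q ≠ 0) :
    RatFunc.eval f x (algebraMap (Polynomial K) (RatFunc K) p / algebraMap (Polynomial K) (RatFunc K) q) =
      Polynomial.eval₂ f x p / Polynomial.eval₂ f x q := by
  have hq0 : q ≠ 0 := fun h => hq (by simp [h])
  set r : RatFunc K := algebraMap (Polynomial K) (RatFunc K) p / algebraMap (Polynomial K) (RatFunc K) q with hr
  have hden0 : algebraMap (Polynomial K) (RatFunc K) r.denom ≠ 0 :=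
    RatFunc.algebraMap_ne_zero (RatFunc.denom_ne_zero r)
  have hqK : algebraMap (Polynomial K) (RatFunc K) q ≠ 0 := RatFunc.algebraMap_ne_zero hq0
  have key : r.num * q = p * r.denom := by
    apply RatFunc.algebraMap_injective K
    rw [_root_.map_mul, _root_.map_mul]
    have h1 : algebraMap (Polynomial K) (RatFunc K) r.num / algebraMap (Polynomial K) (RatFunc K) r.denom
        = algebraMap (Polynomial K) (RatFunc K) p / algebraMap (Polynomial K) (RatFunc K) q := by
      rw [RatFunc.num_div_denom]
    rw [div_eq_div_iff hden0 hqK] at h1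
    exact h1
  have hden : Polynomial.eval₂ f x r.denom ≠ 0 := by
    intro h0
    have hkey := congrArg (Polynomial.eval₂ f x) key
    rw [Polynomial.eval₂_mul, Polynomial.eval₂_mul, h0, mul_zero] at hkey
    have hnum : Polynomial.eval₂ f x r.num = 0 := by
      rcases mul_eq_zero.mp hkey with h | h
      · exact h
      · exact absurd h hq
    obtain ⟨u, v, huv⟩ := RatFunc.isCoprime_num_denom r
    have h2 := congrArg (Polynomial.eval₂ f x) huv
    simp only [Polynomial.eval₂_add, Polynomial.eval₂_mul, h0, hnum, mul_zero, add_zero,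
      Polynomial.eval₂_one] at h2
    exact zero_ne_one h2
  rw [RatFunc.eval, div_eq_div_iff hden hq, ← Polynomial.eval₂_mul, ← Polynomial.eval₂_mul, key]

theorem phi_equivariant_odd {F : Type*} [Field F] [Fintype F]
    (k m : ℤ) (hk : k = 2 * m + 1) (i t : ℕ)
    (ht : 2 * (t : ℤ) = ((Fintype.card F : ℤ) - 1) * k - ((Fintype.card F : ℤ) + 1) - 2 * (i : ℤ) * ((Fintype.card F : ℤ) + 1))
    (P : MvPolynomial (Fin 2) F) (hP : P.IsHomogeneous t) (γ : GL (Fin 2) F) :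
    aeval ![RatFunc.X, (1 : RatFunc F)] (symAct ((i : ℤ) - m) γ P) *
        (RatFunc.X - RatFunc.X ^ (Fintype.card F)) ^ ((i : ℤ) - m) =
      (RatFunc.C ((γ : Matrix (Fin 2) (Fin 2) F) 0 0) +
          RatFunc.C ((γ : Matrix (Fin 2) (Fin 2) F) 1 0) * RatFunc.X) ^ (-k) *
        RatFunc.eval (algebraMap F (RatFunc F))
          ((RatFunc.C ((γ : Matrix (Fin 2) (Fin 2) F) 0 1) +
              RatFunc.C ((γ : Matrix (Fin 2) (Fin 2) F) 1 1) * RatFunc.X) /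
            (RatFunc.C ((γ : Matrix (Fin 2) (Fin 2) F) 0 0) +
              RatFunc.C ((γ : Matrix (Fin 2) (Fin 2) F) 1 0) * RatFunc.X))
          (aeval ![RatFunc.X, (1 : RatFunc F)] P *
            (RatFunc.X - RatFunc.X ^ (Fintype.card F)) ^ ((i : ℤ) - m)) := by
  classical
  obtain ⟨n, hpprime, hcard⟩ := FiniteField.card F (ringChar F)
  haveI : Fact (Nat.Prime (ringChar F)) := ⟨hpprime⟩
  haveI : CharP (RatFunc F) (ringChar F) :=
    charP_of_injective_algebraMap (algebraMap F (RatFunc F)).injective _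
  set q : ℕ := Fintype.card F with hqdef
  set a : F := (γ : Matrix (Fin 2) (Fin 2) F) 0 0 with ha
  set b : F := (γ : Matrix (Fin 2) (Fin 2) F) 0 1 with hb
  set c : F := (γ : Matrix (Fin 2) (Fin 2) F) 1 0 with hc
  set d : F := (γ : Matrix (Fin 2) (Fin 2) F) 1 1 with hd
  set s : ℤ := (i : ℤ) - m with hs
  set z : RatFunc F := RatFunc.X with hz
  have hq2 : 1 < q := Fintype.one_lt_card
  -- determinant
  have hdetval : ((Matrix.GeneralLinearGroup.det γ : Fˣ) : F) = a * d - b * c := by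
    rw [Matrix.GeneralLinearGroup.val_det_apply, Matrix.det_fin_two]
  have hdet0 : a * d - b * c ≠ 0 := by
    rw [← hdetval]; exact Units.ne_zero _
  -- nonvanishing of basic objects
  have hupoly : (Polynomial.C a + Polynomial.C c * Polynomial.X : Polynomial F) ≠ 0 := by
    intro h
    have ha0 : a = 0 := by simpa using congrArg (fun r => Polynomial.coeff r 0) h
    have hc0 : c = 0 := by simpa using congrArg (fun r => Polynomial.coeff r 1) h
    rw [ha0, hc0] at hdet0
    simp at hdet0
  have hgpoly : (Polynomial.X - Polynomial.X ^ q : Polynomial F) ≠ 0 := by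
    intro h
    have h1 := congrArg (fun r => Polynomial.coeff r 1) h
    simp only [Polynomial.coeff_sub, Polynomial.coeff_X_one, Polynomial.coeff_X_pow] at h1
    rw [if_neg (by omega : ¬ (1 : ℕ) = q)] at h1
    simp at h1
  set u : RatFunc F := RatFunc.C a + RatFunc.C c * z with hu
  have huM : u = algebraMap (Polynomial F) (RatFunc F)
      (Polynomial.C a + Polynomial.C c * Polynomial.X) := by
    rw [hu, _root_.map_add, _root_.map_mul, RatFunc.algebraMap_C, RatFunc.algebraMap_C,
      RatFunc.algebraMap_X, hz]
  have hu0 : u ≠ 0 := by rw [huM]; exact RatFunc.algebraMap_ne_zero hupoly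
  set V : RatFunc F := z - z ^ q with hV
  have hVM : V = algebraMap (Polynomial F) (RatFunc F) (Polynomial.X - Polynomial.X ^ q) := by
    rw [hV, _root_.map_sub, _root_.map_pow, RatFunc.algebraMap_X, hz]
  have hV0 : V ≠ 0 := by rw [hVM]; exact RatFunc.algebraMap_ne_zero hgpoly
  set B : RatFunc F := RatFunc.C b + RatFunc.C d * z with hB
  set w : RatFunc F := B / u with hw
  set D : RatFunc F := RatFunc.C (a * d - b * c) with hD
  have hD0 : D ≠ 0 := by
    rw [hD]
    intro h1
    exact hdet0 (RingHom.injective (RatFunc.C) (by rw [h1, map_zero]))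
  -- Frobenius
  have hfrob : ∀ x y : RatFunc F, (x + y) ^ q = x ^ q + y ^ q := by
    intro x y
    rw [hcard]
    exact add_pow_char_pow x y (ringChar F) (n : ℕ)
  have hCq : ∀ e : F, (RatFunc.C e : RatFunc F) ^ q = RatFunc.C e := by
    intro e
    rw [← _root_.map_pow, hqdef, FiniteField.pow_card]
  have hBq : B ^ q = RatFunc.C b + RatFunc.C d * z ^ q := by
    rw [hB, hfrob, hCq, mul_pow, hCq]
  have huq : u ^ q = RatFunc.C a + RatFunc.C c * z ^ q := by
    rw [hu, hfrob, hCq, mul_pow, hCq]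
  -- Möbius identity
  have hwq : w - w ^ q = D * V / u ^ (q + 1) := by
    have hnum : B * u ^ q - u * B ^ q = D * V := by
      rw [hBq, huq, hB, hu, hD, hV, _root_.map_sub, _root_.map_mul, _root_.map_mul]
      ring
    rw [hw, div_pow, div_sub_div _ _ hu0 (pow_ne_zero _ hu0), hnum, ← pow_succ']
  have hw0 : w - w ^ q ≠ 0 := by
    rw [hwq]
    exact div_ne_zero (mul_ne_zero hD0 hV0) (pow_ne_zero _ hu0)
  -- LHS
  have hvecL : (fun j => aeval ![z, (1 : RatFunc F)]
      (![(C d : MvPolynomial (Fin 2) F) * X 0 + C b * X 1, C c * X 0 + C a * X 1] j))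
      = ![RatFunc.C d * z + RatFunc.C b, RatFunc.C c * z + RatFunc.C a] := by
    funext j
    fin_cases j <;> simp [hz, RatFunc.algebraMap_eq_C]
  have hLHS : aeval ![z, (1 : RatFunc F)] (symAct s γ P)
      = D ^ s * aeval ![RatFunc.C d * z + RatFunc.C b, RatFunc.C c * z + RatFunc.C a] P := by
    simp only [symAct]
    rw [← ha, ← hb, ← hc, ← hd, _root_.map_smul, Algebra.smul_def,
      Units.val_zpow_eq_zpow_val, hdetval, RatFunc.algebraMap_eq_C, map_zpow₀, ← hD,
      comp_aeval_apply, hvecL]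
  -- the polynomial F(X, 1)
  set f₀ : Polynomial F := MvPolynomial.aeval ![Polynomial.X, (1 : Polynomial F)] P with hf₀def
  have hvecF : (fun j => (IsScalarTower.toAlgHom F (Polynomial F) (RatFunc F))
      (![Polynomial.X, (1 : Polynomial F)] j)) = ![z, (1 : RatFunc F)] := by
    funext j
    fin_cases j <;> simp [hz, RatFunc.algebraMap_X]
  have hf₀ : algebraMap (Polynomial F) (RatFunc F) f₀ = aeval ![z, (1 : RatFunc F)] P := by
    rw [hf₀def, show (algebraMap (Polynomial F) (RatFunc F)) (MvPolynomial.aeval ![Polynomial.X, (1 : Polynomial F)] P)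
      = (IsScalarTower.toAlgHom F (Polynomial F) (RatFunc F)) (MvPolynomial.aeval ![Polynomial.X, (1 : Polynomial F)] P) from rfl,
      comp_aeval_apply, hvecF]
  set g : Polynomial F := Polynomial.X - Polynomial.X ^ q with hgdef
  -- rewrite the evaluation argument as a quotient of polynomials
  have hargV : V ^ s = algebraMap (Polynomial F) (RatFunc F) (g ^ s.toNat)
      / algebraMap (Polynomial F) (RatFunc F) (g ^ (-s).toNat) := by
    rw [_root_.map_pow, _root_.map_pow, ← hVM, ← zpow_natCast V s.toNat,
      ← zpow_natCast V (-s).toNat, ← zpow_sub₀ hV0]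
    congr 1
    omega
  have harg : aeval ![z, (1 : RatFunc F)] P * V ^ s
      = algebraMap (Polynomial F) (RatFunc F) (f₀ * g ^ s.toNat)
        / algebraMap (Polynomial F) (RatFunc F) (g ^ (-s).toNat) := by
    rw [_root_.map_mul, hf₀, hargV, mul_div_assoc]
  have hEg : Polynomial.eval₂ (algebraMap F (RatFunc F)) w g = w - w ^ q := by
    rw [hgdef]
    simp
  have hEdenom : Polynomial.eval₂ (algebraMap F (RatFunc F)) w (g ^ (-s).toNat) ≠ 0 := by
    rw [Polynomial.eval₂_pow, hEg]
    exact pow_ne_zero _ hw0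
  have hvecW : (fun j => (Polynomial.aeval w : Polynomial F →ₐ[F] RatFunc F)
      (![Polynomial.X, (1 : Polynomial F)] j)) = ![w, (1 : RatFunc F)] := by
    funext j
    fin_cases j <;> simp
  have hEf : Polynomial.eval₂ (algebraMap F (RatFunc F)) w f₀ = aeval ![w, (1 : RatFunc F)] P := by
    rw [← Polynomial.aeval_def, hf₀def,
      show (Polynomial.aeval w) (MvPolynomial.aeval ![Polynomial.X, (1 : Polynomial F)] P)
        = (Polynomial.aeval w : Polynomial F →ₐ[F] RatFunc F) (MvPolynomial.aeval ![Polynomial.X, (1 : Polynomial F)] P) from rfl,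
      comp_aeval_apply, hvecW]
  -- homogeneity
  have hvec : ![w, (1 : RatFunc F)] = fun j => u⁻¹ * (![B, u] j) := by
    funext j
    fin_cases j
    · simp [hw, div_eq_inv_mul]
    · simp [inv_mul_cancel₀ hu0]
  have hhom : aeval ![w, (1 : RatFunc F)] P = u⁻¹ ^ t * aeval ![B, u] P := by
    rw [hvec, aeval_mul_left_of_isHomogeneous hP]
  have hvec2 : aeval ![B, u] P
      = aeval ![RatFunc.C d * z + RatFunc.C b, RatFunc.C c * z + RatFunc.C a] P := by
    have hv : (![B, u] : Fin 2 → RatFunc F)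
        = ![RatFunc.C d * z + RatFunc.C b, RatFunc.C c * z + RatFunc.C a] := by
      funext j
      fin_cases j <;> simp [hB, hu] <;> ring
    rw [hv]
  -- evaluate
  have hEvalFull : Polynomial.eval₂ (algebraMap F (RatFunc F)) w (f₀ * g ^ s.toNat)
      / Polynomial.eval₂ (algebraMap F (RatFunc F)) w (g ^ (-s).toNat)
      = aeval ![w, (1 : RatFunc F)] P * (w - w ^ q) ^ s := by
    rw [Polynomial.eval₂_mul, Polynomial.eval₂_pow, Polynomial.eval₂_pow, hEg, hEf, mul_div_assoc]
    congr 1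
    rw [← zpow_natCast (w - w ^ q) s.toNat, ← zpow_natCast (w - w ^ q) (-s).toNat,
      ← zpow_sub₀ hw0]
    congr 1
    omega
  -- exponent bookkeeping
  have hexp : -k = (t : ℤ) + ((q : ℤ) + 1) * s := by
    have h2 : 2 * (-k - (t : ℤ) - ((q : ℤ) + 1) * s) = 0 := by
      rw [hs]
      linear_combination (-1 : ℤ) * ht - ((q : ℤ) + 1) * hk
    linarith
  -- put everything together
  rw [hLHS, harg, ratFunc_eval_div' _ _ _ _ hEdenom, hEvalFull, hhom, hvec2, hwq]
  have hupow : ((u ^ (q + 1) : RatFunc F)) ^ s = u ^ (((q : ℤ) + 1) * s) := by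
    rw [← zpow_natCast u (q + 1), ← _root_.zpow_mul]
    norm_num
  rw [div_zpow, mul_zpow, hupow, hexp, zpow_add₀ hu0, zpow_natCast, inv_pow]
  have h1 : (u : RatFunc F) ^ t ≠ 0 := pow_ne_zero _ hu0
  have h2 : u ^ (((q : ℤ) + 1) * s) ≠ 0 := zpow_ne_zero _ hu0
  have h3 : D ^ s ≠ 0 := zpow_ne_zero _ hD0
  field_simp
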